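/- Let L be a regular language over a finite alphabet Σ, let a ∈ Σ and let k ∈ ℕ. Then a⁻¹(𝕃_k(L)) = 𝕃_k(a⁻¹(L)) ∪ ⋃_{b∈Σ∖{a}} 𝕃_{k−1}(b⁻¹(L)) ∪ 𝕃_{k−1}(L) ∪ a⁻¹(⋃_{b∈Σ} 𝕃_{k−1}(b⁻¹(L))). -/

import Mathlib

/-!
Quotient formula for the Levenshtein similarity operator.

`levDist u v` is the Levenshtein (edit) distance: the minimal number of
single-symbol insertions, deletions and substitutions transforming `u` into
`v` (Mathlib's `levenshtein` with the default cost structure, where every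
insertion/deletion costs `1` and substituting `a` by `b` costs `1` if `a ≠ b`
and `0` otherwise).
For `k ∈ ℕ ∪ {⊥}` (encoded by `Option ℕ`), `levBall k L` is the language
`𝕃_k(L)` of all words at Levenshtein distance at most `k` from some word of
`L` (with `𝕃_⊥(L) = ∅`).  `predO k` is `k - 1`, where `0 - 1 = ⊥`.
`leftQuot a L` is the left quotient `a⁻¹(L)`.  Unions of languages are
expressed with the lattice operations `⊔`/`⨆` on `Language σ`.
-/

/-- The left quotient `a⁻¹(L) = {w | aw ∈ L}` of a language w.r.t. a symbol. -/
def leftQuot {σ : Type} (a : σ) (L : Language σ) : Language σ :=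
  {w | a :: w ∈ L}

/-- The cost structure of Levenshtein distance (removed from Mathlib; restored here
with its old meaning). -/
structure Levenshtein.Cost (α β δ : Type) where
  delete : α → δ
  insert : β → δ
  substitute : α → β → δ

/-- The default cost structure: insertions/deletions cost `1`, substitution costs
`0` for equal symbols and `1` otherwise (as in the old Mathlib). -/
def Levenshtein.defaultCost {α : Type} [DecidableEq α] : Levenshtein.Cost α α ℕ where
  delete _ := 1
  insert _ := 1
  substitute a b := if a = b then 0 else 1

/-- The Levenshtein distance w.r.t. a cost structure (old Mathlib's `levenshtein`,
spelled out by its defining recursion). -/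
def levenshtein {α β δ : Type} [AddMonoid δ] [Min δ] (C : Levenshtein.Cost α β δ) :
    List α → List β → δ
  | [], ys => (ys.map C.insert).sum
  | x :: xs, [] => C.delete x + levenshtein C xs []
  | x :: xs, y :: ys =>
    min (C.delete x + levenshtein C xs (y :: ys))
      (min (C.insert y + levenshtein C (x :: xs) ys)
        (C.substitute x y + levenshtein C xs ys))

/-- The Levenshtein (edit) distance of two words. -/
def levDist {σ : Type} [DecidableEq σ] (u v : List σ) : ℕ :=
  levenshtein Levenshtein.defaultCost u v

/-- `𝕃_k(L)`: the set of words at Levenshtein distance at most `k` from some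
word of `L`; the empty language when `k = ⊥`. -/
def levBall {σ : Type} [DecidableEq σ] (k : Option ℕ) (L : Language σ) : Language σ :=
  match k with
  | none => ⊥
  | some k => {w | ∃ u ∈ L, levDist w u ≤ k}

/-- `k - 1` on `ℕ ∪ {⊥}`: `0 - 1 = ⊥` and `⊥ - 1 = ⊥`. -/
def predO (k : Option ℕ) : Option ℕ :=
  k.bind fun n => if n = 0 then none else some (n - 1)

theorem lang_mem_setOf {σ : Type} {p : List σ → Prop} {x : List σ} :
    x ∈ ({w | p w} : Language σ) ↔ p x := Iff.rfl

theorem lang_mem_sup {σ : Type} {A B : Language σ} {x : List σ} :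
    x ∈ A ⊔ B ↔ x ∈ A ∨ x ∈ B := Iff.rfl

theorem levDist_cons_cons {σ : Type} [DecidableEq σ] (x y : σ) (xs ys : List σ) :
    levDist (x :: xs) (y :: ys) =
      min (1 + levDist xs (y :: ys))
        (min (1 + levDist (x :: xs) ys) ((if x = y then 0 else 1) + levDist xs ys)) := by
  rw [levDist, levenshtein]; rfl

theorem levDist_cons_nil {σ : Type} [DecidableEq σ] (x : σ) (xs : List σ) :
    levDist (x :: xs) [] = 1 + levDist xs [] := by
  rw [levDist, levenshtein]; rfl

theorem key {σ : Type} [DecidableEq σ] (L : Language σ) (a : σ) (k : ℕ) (w : List σ) :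
    (∃ u ∈ L, levDist (a :: w) u ≤ k) ↔
      (∃ u, a :: u ∈ L ∧ levDist w u ≤ k) ∨
      (∃ b, b ≠ a ∧ 1 ≤ k ∧ ∃ u, b :: u ∈ L ∧ levDist w u ≤ k - 1) ∨
      (1 ≤ k ∧ ∃ u ∈ L, levDist w u ≤ k - 1) ∨
      (1 ≤ k ∧ ∃ b, ∃ u, b :: u ∈ L ∧ levDist (a :: w) u ≤ k - 1) := by
  constructor
  · rintro ⟨u, huL, hd⟩
    match u with
    | [] =>
      rw [levDist_cons_nil] at hd
      exact Or.inr (Or.inr (Or.inl ⟨by omega, [], huL, by omega⟩))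
    | b :: v =>
      rw [levDist_cons_cons, min_le_iff, min_le_iff] at hd
      rcases hd with h | h | h
      · exact Or.inr (Or.inr (Or.inl ⟨by omega, b :: v, huL, by omega⟩))
      · exact Or.inr (Or.inr (Or.inr ⟨by omega, b, v, huL, by omega⟩))
      · by_cases hab : a = b
        · subst hab
          simp only [if_pos rfl] at h
          exact Or.inl ⟨v, huL, by omega⟩
        · rw [if_neg hab] at h
          exact Or.inr (Or.inl ⟨b, fun e => hab e.symm, by omega, v, huL, by omega⟩)
  · rintro (⟨u, huL, hd⟩ | ⟨b, hba, hk, u, huL, hd⟩ | ⟨hk, u, huL, hd⟩ | ⟨hk, b, u, huL, hd⟩)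
    · refine ⟨a :: u, huL, ?_⟩
      rw [levDist_cons_cons, if_pos rfl]
      omega
    · refine ⟨b :: u, huL, ?_⟩
      rw [levDist_cons_cons, if_neg (fun e => hba e.symm)]
      omega
    · match u with
      | [] =>
        refine ⟨[], huL, ?_⟩
        rw [levDist_cons_nil]; omega
      | c :: v =>
        refine ⟨c :: v, huL, ?_⟩
        rw [levDist_cons_cons, min_le_iff]
        left; omega
    · refine ⟨b :: u, huL, ?_⟩
      rw [levDist_cons_cons, min_le_iff, min_le_iff]
      right; left; omega

/-- **Quotient formula for the Levenshtein operator.**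
For a regular language `L` over a finite alphabet `σ`, a symbol `a` and `k ∈ ℕ`:
`a⁻¹(𝕃_k(L)) = 𝕃_k(a⁻¹(L)) ∪ ⋃_{b ∈ Σ \ {a}} 𝕃_{k-1}(b⁻¹(L)) ∪ 𝕃_{k-1}(L)
               ∪ a⁻¹(⋃_{b ∈ Σ} 𝕃_{k-1}(b⁻¹(L)))`. -/
theorem quotient_levBall {σ : Type} [Fintype σ] [DecidableEq σ]
    (L : Language σ) (hL : L.IsRegular) (a : σ) (k : ℕ) :
    leftQuot a (levBall (some k) L) =
      levBall (some k) (leftQuot a L) ⊔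
        (⨆ b ∈ {b : σ | b ≠ a}, levBall (predO (some k)) (leftQuot b L)) ⊔
        levBall (predO (some k)) L ⊔
        leftQuot a (⨆ b : σ, levBall (predO (some k)) (leftQuot b L)) := by
  have hp : predO (some k) = if k = 0 then none else some (k - 1) := by
    simp [predO]
  ext w
  rw [hp]
  constructor
  · rintro (⟨u, h1, h2⟩ : ∃ u ∈ L, levDist (a :: w) u ≤ k)
    rcases (key L a k w).mp ⟨u, h1, h2⟩ with
      ⟨v, g1, g2⟩ | ⟨b, hba, hk, v, g1, g2⟩ | ⟨hk, v, g1, g2⟩ | ⟨hk, b, v, g1, g2⟩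
    · exact Or.inl (Or.inl (Or.inl ⟨v, g1, g2⟩))
    · refine Or.inl (Or.inl (Or.inr (Language.mem_iSup.mpr ⟨b, Language.mem_iSup.mpr
        ⟨hba, ?_⟩⟩)))
      rw [if_neg (by omega : ¬ k = 0)]
      exact ⟨v, g1, g2⟩
    · refine Or.inl (Or.inr ?_)
      rw [if_neg (by omega : ¬ k = 0)]
      exact ⟨v, g1, g2⟩
    · refine Or.inr (Language.mem_iSup.mpr ⟨b, ?_⟩)
      rw [if_neg (by omega : ¬ k = 0)]
      exact ⟨v, g1, g2⟩
  · rintro (((⟨v, g1, g2⟩ | h) | h) | h)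
    · exact (key L a k w).mpr (Or.inl ⟨v, g1, g2⟩)
    · obtain ⟨b, hb2⟩ := Language.mem_iSup.mp h
      obtain ⟨hba, hm⟩ := Language.mem_iSup.mp hb2
      by_cases hk : k = 0
      · rw [hk] at hm; exact absurd hm (by simp [levBall]; exact Set.notMem_empty _)
      · rw [if_neg hk] at hm
        obtain ⟨v, g1, g2⟩ := hm
        exact (key L a k w).mpr (Or.inr (Or.inl ⟨b, hba, by omega, v, g1, g2⟩))
    · by_cases hk : k = 0
      · rw [hk] at h; exact absurd h (by simp [levBall]; exact Set.notMem_empty _)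
      · rw [if_neg hk] at h
        obtain ⟨v, g1, g2⟩ := h
        exact (key L a k w).mpr (Or.inr (Or.inr (Or.inl ⟨by omega, v, g1, g2⟩)))
    · obtain ⟨b, hm⟩ := Language.mem_iSup.mp h
      by_cases hk : k = 0
      · rw [hk] at hm; exact absurd hm (by simp [levBall]; exact Set.notMem_empty _)
      · rw [if_neg hk] at hm
        obtain ⟨v, g1, g2⟩ := hm
        exact (key L a k w).mpr (Or.inr (Or.inr (Or.inr ⟨by omega, b, v, g1, g2⟩)))
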